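/- Suppose ft^n ∈ R[t] with f ∈ R and n > 0 satisfies an integral equation over the graded ring A = ⊕_{m≥0} I(mD) t^m, where I(mD) = { g ∈ R : μ_j(g) ≥ ⌈m α_j⌉ for all j } for fixed dominating valuations μ_j and positive reals α_j. Then μ_j(f) ≥ ⌈n α_j⌉ for all j; i.e., f ∈ I(nD). -/

import Mathlib

noncomputable section

/-- A valuation of the quotient field of a local domain `R` that dominates `R`. -/
structure DominatingValuation (R : Type*) [CommRing R] [IsDomain R] [IsLocalRing R] where
  v : AddValuation (FractionRing R) (WithTop ℤ)
  nonneg : ∀ f : R, 0 ≤ v (algebraMap R (FractionRing R) f)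
  dominates : ∀ f : R, f ∈ IsLocalRing.maximalIdeal R ↔ 0 < v (algebraMap R (FractionRing R) f)

variable {R : Type*} [CommRing R] [IsDomain R] [IsLocalRing R]

/-- `I(mD) = {g ∈ R ∣ μⱼ(g) ≥ ⌈m αⱼ⌉ for all j}`. -/
def divisorialPiece {s : ℕ} (μ : Fin s → DominatingValuation R) (α : Fin s → ℝ) (m : ℕ) :
    Set R :=
  {g | ∀ j, ((⌈(m : ℝ) * α j⌉ : ℤ) : WithTop ℤ) ≤ (μ j).v (algebraMap R (FractionRing R) g)}

/-- **(Key step in the integral closedness of divisorial Rees algebras.)**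
Suppose `f tⁿ ∈ R[t]` (`n > 0`) satisfies an integral equation over `A = ⊕ₘ I(mD) tᵐ`,
i.e. there is a relation `f^d + a_{d-1} f^{d-1} + ⋯ + a_0 = 0` with `aᵢ ∈ I(n(d-i)D)`.
Then `μⱼ(f) ≥ ⌈n αⱼ⌉` for all `j`, i.e. `f ∈ I(nD)`. -/
theorem stmt_3 {s : ℕ} (μ : Fin s → DominatingValuation R) (α : Fin s → ℝ)
    (hα : ∀ j, 0 < α j)
    (hℕ : ∀ j, ∀ g : R, g ≠ 0 → ∃ k : ℕ, (μ j).v (algebraMap R (FractionRing R) g) = (k : ℤ))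
    (f : R) (n : ℕ) (hn : 0 < n) (d : ℕ) (hd : 0 < d) (a : ℕ → R)
    (ha : ∀ i, i < d → a i ∈ divisorialPiece μ α (n * (d - i)))
    (heq : f ^ d + ∑ i ∈ Finset.range d, a i * f ^ i = 0) :
    f ∈ divisorialPiece μ α n := by
  intro j
  set K := FractionRing R
  set F : R →+* K := algebraMap R K with hF
  set V := (μ j).v with hV
  by_cases hf0 : f = 0
  · subst hf0
    rw [show F (0:R) = 0 from map_zero F, AddValuation.map_zero]
    exact le_top
  obtain ⟨k, hk⟩ := hℕ j f hf0
  by_contra hlt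
  push_neg at hlt
  rw [hk] at hlt
  have hk' : (k : ℤ) < ⌈(n : ℝ) * α j⌉ := by exact_mod_cast hlt
  have hkr : (k : ℝ) < (n : ℝ) * α j := by
    have := Int.lt_ceil.mp hk'
    exact_mod_cast this
  -- value of f^d
  have hFd : V (F (f ^ d)) = ((d * k : ℤ) : WithTop ℤ) := by
    rw [map_pow, AddValuation.map_pow, hk]
    norm_cast
  -- the sum equals -f^d
  have hsum : V (F (∑ i ∈ Finset.range d, a i * f ^ i)) = ((d * k : ℤ) : WithTop ℤ) := by
    have h1 : F (∑ i ∈ Finset.range d, a i * f ^ i) = - F (f ^ d) := by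
      have := congrArg F heq
      rw [map_add, map_zero] at this
      linear_combination this
    rw [h1, AddValuation.map_neg, hFd]
  have hstrict : ((d * k : ℤ) : WithTop ℤ) < V (F (∑ i ∈ Finset.range d, a i * f ^ i)) := by
    rw [map_sum]
    apply AddValuation.map_lt_sum' V (WithTop.coe_lt_top _)
    intro i hi
    have hid : i < d := Finset.mem_range.mp hi
    have hval : ((⌈((n * (d - i) : ℕ) : ℝ) * α j⌉ : ℤ) : WithTop ℤ) ≤ V (F (a i)) :=
      ha i hid j
    rw [map_mul, map_pow, AddValuation.map_mul, AddValuation.map_pow, hk]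
    have hsm : (i • (((k : ℤ) : WithTop ℤ))) = ((i * k : ℤ) : WithTop ℤ) := by norm_cast
    rw [hsm]
    have hceil : ((d : ℤ) * k : ℤ) < ⌈((n * (d - i) : ℕ) : ℝ) * α j⌉ + i * k := by
      have hreal : (((d - i : ℕ) : ℤ) * k : ℝ) < ((n * (d - i) : ℕ) : ℝ) * α j := by
        have hpos : (0 : ℝ) < ((d - i : ℕ) : ℝ) := by
          have : 0 < d - i := Nat.sub_pos_of_lt hid
          exact_mod_cast this
        have := mul_lt_mul_of_pos_left hkr hpos
        push_cast
        push_cast at this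
        nlinarith
      have h2 : (((d - i : ℕ) : ℤ) * k : ℤ) < ⌈((n * (d - i) : ℕ) : ℝ) * α j⌉ := by
        apply Int.lt_ceil.mpr
        exact_mod_cast hreal
      have h3 : ((d - i : ℕ) : ℤ) = (d : ℤ) - i := by
        have := Nat.le_of_lt hid
        omega
      rw [h3] at h2
      nlinarith
    calc ((d * k : ℤ) : WithTop ℤ)
        < ((⌈((n * (d - i) : ℕ) : ℝ) * α j⌉ + i * k : ℤ) : WithTop ℤ) :=
          WithTop.coe_lt_coe.mpr hceil
      _ = ((⌈((n * (d - i) : ℕ) : ℝ) * α j⌉ : ℤ) : WithTop ℤ) + ((i * k : ℤ) : WithTop ℤ) := by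
          push_cast; ring
      _ ≤ V (F (a i)) + ((i * k : ℤ) : WithTop ℤ) := add_le_add_left hval _
  exact absurd hsum (ne_of_gt hstrict)


end
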